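/- add(M) = min{b, cov(M)}: the additivity of the meager ideal on ℝ equals the minimum of the bounding number b and the covering number cov(M) of the meager ideal. -/

import Mathlib

open Filter Set Cardinal

/-- The Rothberger property `S1(O,O)`: for every sequence of open covers one can select one
member from each so that the selections form a cover. -/
def RothbergerProp (X : Type*) [TopologicalSpace X] : Prop :=
  ∀ U : ℕ → Set (Set X),
    (∀ n, (∀ s ∈ U n, IsOpen s) ∧ ⋃₀ U n = Set.univ) →
    ∃ f : ℕ → Set X, (∀ n, f n ∈ U n) ∧ (⋃ n, f n) = Set.univ

/-- The Hurewicz property `Ufin(O,Γ)`: for every sequence of open covers one can select finite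
subfamilies whose unions form a γ-cover (every point is in all but finitely many of them). -/
def HurewiczProp (X : Type*) [TopologicalSpace X] : Prop :=
  ∀ U : ℕ → Set (Set X),
    (∀ n, (∀ s ∈ U n, IsOpen s) ∧ ⋃₀ U n = Set.univ) →
    ∃ F : ℕ → Set (Set X), (∀ n, F n ⊆ U n ∧ (F n).Finite) ∧
      ∀ x : X, ∀ᶠ n in atTop, x ∈ ⋃₀ F n

/-- The Menger property `Ufin(O,O)`. -/
def MengerProp (X : Type*) [TopologicalSpace X] : Prop :=
  ∀ U : ℕ → Set (Set X),
    (∀ n, (∀ s ∈ U n, IsOpen s) ∧ ⋃₀ U n = Set.univ) →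
    ∃ F : ℕ → Set (Set X), (∀ n, F n ⊆ U n ∧ (F n).Finite) ∧
      (⋃ n, ⋃₀ F n) = Set.univ

/-- The Gerlits–Nagy property `(*)_GN` = Rothberger + Hurewicz
(Kočinac–Scheepers characterization). -/
def GerlitsNagy (X : Type*) [TopologicalSpace X] : Prop :=
  RothbergerProp X ∧ HurewiczProp X

/-- Strong measure zero: for every sequence of positive reals `ε n` there is a cover
`A n` with `diam (A n) < ε n`. -/
def StrongMeasureZero (X : Type*) [PseudoMetricSpace X] : Prop :=
  ∀ ε : ℕ → ℝ, (∀ n, 0 < ε n) →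
    ∃ A : ℕ → Set X, (⋃ n, A n) = Set.univ ∧ ∀ n, EMetric.diam (A n) < ENNReal.ofReal (ε n)

/-- The bounding number `b`: least cardinality of an unbounded family in `(ℕ → ℕ, ≤*)`. -/
noncomputable def boundingNumber : Cardinal :=
  sInf { c : Cardinal | ∃ F : Set (ℕ → ℕ), #F = c ∧
    ∀ g : ℕ → ℕ, ∃ f ∈ F, ¬ ∀ᶠ n in atTop, f n ≤ g n }

/-- `cov(M)`: least cardinality of a family of meager sets of reals covering `ℝ`. -/
noncomputable def covMeager : Cardinal :=
  sInf { c : Cardinal | ∃ S : Set (Set ℝ), #S = c ∧ (∀ A ∈ S, IsMeagre A) ∧ ⋃₀ S = Set.univ }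

/-- `add(M)`: least cardinality of a family of meager sets of reals whose union is not meager. -/
noncomputable def addMeager : Cardinal :=
  sInf { c : Cardinal | ∃ S : Set (Set ℝ), #S = c ∧ (∀ A ∈ S, IsMeagre A) ∧ ¬ IsMeagre (⋃₀ S) }

/-- An ω-cover: `Set.univ ∉ U` and every finite set is contained in some member of `U`. -/
def IsOmegaCover {X : Type*} (U : Set (Set X)) : Prop :=
  Set.univ ∉ U ∧ ∀ F : Set X, F.Finite → ∃ u ∈ U, F ⊆ u

/-- A γ-cover: an infinite family such that every point belongs to all but finitely many members. -/
def IsGammaCover {X : Type*} (U : Set (Set X)) : Prop :=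
  U.Infinite ∧ ∀ x : X, {u ∈ U | x ∉ u}.Finite

/-- A family `U` is groupable (`U ∈ Ω^gp`) if it admits a partition into finite sets such that
every finite `F ⊆ X` is contained in a member of all but finitely many pieces. -/
def IsGroupable {X : Type*} (U : Set (Set X)) : Prop :=
  ∃ P : Set (Set (Set X)),
    (∀ G ∈ P, G.Finite ∧ G.Nonempty) ∧ P.PairwiseDisjoint id ∧ ⋃₀ P = U ∧
    ∀ F : Set X, F.Finite → {G ∈ P | ¬ ∃ u ∈ G, F ⊆ u}.Finite

/-- The selection property `S1(Ω, Ω^gp)`. -/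
def S1OmegaOmegaGp (X : Type*) [TopologicalSpace X] : Prop :=
  ∀ U : ℕ → Set (Set X),
    (∀ n, (∀ s ∈ U n, IsOpen s) ∧ IsOmegaCover (U n)) →
    ∃ f : ℕ → Set X, (∀ n, f n ∈ U n) ∧
      IsOmegaCover (Set.range f) ∧ IsGroupable (Set.range f)

/-- A γ-set: every open ω-cover contains a γ-subcover. -/
def IsGammaSet (X : Type*) [TopologicalSpace X] : Prop :=
  ∀ U : Set (Set X), (∀ s ∈ U, IsOpen s) → IsOmegaCover U →
    ∃ V ⊆ U, IsGammaCover V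


namespace AMX

abbrev C := ℕ → Bool

/-- agreement on [a, b) -/
def agree (x y : C) (a b : ℕ) : Prop := ∀ i, a ≤ i → i < b → x i = y i

lemma isOpen_agree (y : C) (a b : ℕ) : IsOpen {x : C | agree x y a b} := by
  have : {x : C | agree x y a b} = ⋂ i ∈ Finset.Ico a b, {x : C | x i = y i} := by
    ext x
    simp only [mem_iInter, Finset.mem_Ico, mem_setOf_eq, agree]
    constructor
    · rintro h i ⟨h1, h2⟩; exact h i h1 h2
    · rintro h i h1 h2; exact h i ⟨h1, h2⟩
  rw [this]
  refine isOpen_biInter_finset fun i _ => ?_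
  have : {x : C | x i = y i} = (fun p : C => p i) ⁻¹' {y i} := by ext x; simp
  rw [this]
  exact IsOpen.preimage (continuous_apply i) (isOpen_discrete {y i})

/-- every open set contains a full cylinder around each of its points -/
lemma exists_cyl {U : Set C} (hU : IsOpen U) {x : C} (hx : x ∈ U) :
    ∃ n, ∀ z : C, (∀ i, i < n → z i = x i) → z ∈ U := by
  obtain ⟨I, u, h1, h2⟩ := isOpen_pi_iff.mp hU x hx
  rcases I.exists_nat_subset_range with ⟨n, hn⟩
  refine ⟨n, fun z hz => h2 ?_⟩
  intro i hi
  have : i < n := by simpa using hn hi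
  rw [hz i this]
  exact (h1 i hi).2

/-- canonical meager sets -/
def Mset (m : ℕ → ℕ) (y : C) : Set C :=
  {x | ∀ᶠ j in atTop, ¬ agree x y (m j) (m (j + 1))}

lemma isMeagre_Mset {m : ℕ → ℕ} (hm : StrictMono m) (y : C) : IsMeagre (Mset m y) := by
  have : Mset m y = ⋃ N : ℕ, {x : C | ∀ j, N ≤ j → ¬ agree x y (m j) (m (j+1))} := by
    ext x
    simp [Mset, eventually_atTop, mem_iUnion]
  rw [this]
  apply isMeagre_iUnion
  intro N
  -- each piece is closed with empty interior, hence nowhere dense, hence meager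
  have hclosed : IsClosed {x : C | ∀ j, N ≤ j → ¬ agree x y (m j) (m (j+1))} := by
    have : {x : C | ∀ j, N ≤ j → ¬ agree x y (m j) (m (j+1))}
        = ⋂ j ∈ {j : ℕ | N ≤ j}, {x : C | agree x y (m j) (m (j+1))}ᶜ := by
      ext x; simp [mem_iInter]
    rw [this]
    exact isClosed_biInter fun j _ => (isOpen_agree y _ _).isClosed_compl
  have hint : interior {x : C | ∀ j, N ≤ j → ¬ agree x y (m j) (m (j+1))} = ∅ := by
    rw [eq_empty_iff_forall_notMem]
    intro x hx
    obtain ⟨n, hn⟩ := exists_cyl isOpen_interior hx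
    set j := max N n with hj
    have hmj : n ≤ m j := le_trans (le_max_right N n) (le_trans (hm.le_apply) le_rfl)
    set z : C := fun i => if m j ≤ i ∧ i < m (j+1) then y i else x i with hz
    have hzU : z ∈ interior {x : C | ∀ j, N ≤ j → ¬ agree x y (m j) (m (j+1))} := by
      apply hn
      intro i hi
      have : ¬ (m j ≤ i ∧ i < m (j+1)) := by
        rintro ⟨h1, _⟩; exact absurd (lt_of_lt_of_le hi hmj) (not_lt.mpr h1)
      simp [hz, this]
    have hzA := interior_subset hzU
    apply hzA j (le_max_left N n)
    intro i h1 h2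
    simp [hz, h1, h2]
  have hnwd : IsNowhereDense {x : C | ∀ j, N ≤ j → ¬ agree x y (m j) (m (j+1))} :=
    hclosed.isNowhereDense_iff.mpr hint
  rw [isMeagre_iff_countable_union_isNowhereDense]
  exact ⟨{_root_.closure {x : C | ∀ j, N ≤ j → ¬ agree x y (m j) (m (j+1))}},
    by simpa using hnwd.closure, countable_singleton _,
    by simpa using subset_closure⟩

lemma sublB {D : Set C} (hDo : IsOpen D) (hDd : Dense D) (N : ℕ) :
    ∃ M y, N < M ∧ ∀ x : C, agree x y N M → x ∈ D := by
  classical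
  have main : ∀ L : List C, ∃ M y, N < M ∧ ∀ x : C, agree x y N M →
      (∃ w ∈ L, agree x w 0 N) → x ∈ D := by
    intro L
    induction L with
    | nil =>
        refine ⟨N+1, fun _ => false, Nat.lt_succ_self N, ?_⟩
        rintro x _ ⟨w, hw, _⟩; simp at hw
    | cons w L ih =>
      obtain ⟨M, y, hM, hy⟩ := ih
      set Q : Set C := {x | agree x w 0 N ∧ agree x y N M} with hQ
      have hQo : IsOpen Q := (isOpen_agree w 0 N).inter (isOpen_agree y N M)
      have hQne : Q.Nonempty := by
        refine ⟨fun i => if i < N then w i else y i, ?_, ?_⟩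
        · intro i h0 hi; simp [hi]
        · intro i h1 h2; simp [not_lt.mpr h1]
      obtain ⟨x₀, hx₀D, hx₀Q⟩ := hDd.exists_mem_open hQo hQne
      obtain ⟨n, hn⟩ := exists_cyl hDo hx₀D
      refine ⟨max M n + 1, fun i => if i < M then y i else x₀ i, by omega, ?_⟩
      rintro x hx ⟨w', hw', hxw'⟩
      rcases List.mem_cons.mp hw' with h | h
      · subst h
        apply hn
        intro i hi
        by_cases h1 : i < N
        · exact (hxw' i (Nat.zero_le i) h1).trans (hx₀Q.1 i (Nat.zero_le i) h1).symm
        · have hxi := hx i (not_lt.mp h1) (by omega)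
          by_cases h2 : i < M
          · rw [hxi]; simp only [if_pos h2]
            exact (hx₀Q.2 i (not_lt.mp h1) h2).symm
          · rw [hxi]; simp only [if_neg h2]
      · refine hy x ?_ ⟨w', h, hxw'⟩
        intro i h1 h2
        have := hx i h1 (by omega)
        simpa [h2] using this
  obtain ⟨M, y, hM, h⟩ := main ((Finset.univ : Finset (Fin N → Bool)).toList.map
    (fun p i => if h : i < N then p ⟨i, h⟩ else false))
  refine ⟨M, y, hM, fun x hx => h x hx ?_⟩
  refine ⟨fun i => if h : i < N then x i else false, ?_, ?_⟩
  · simp only [List.mem_map]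
    exact ⟨fun k : Fin N => x k, by simp [Finset.mem_toList], rfl⟩
  · intro i _ h2; simp [h2]

lemma exists_Mset_superset {A : Set C} (hA : IsMeagre A) :
    ∃ m : ℕ → ℕ, ∃ y : C, m 0 = 0 ∧ StrictMono m ∧ A ⊆ Mset m y := by
  classical
  obtain ⟨S, hSnwd, hScnt, hSsub⟩ := isMeagre_iff_countable_union_isNowhereDense.mp hA
  obtain ⟨f, hf⟩ := (hScnt.insert ∅).exists_eq_range (insert_nonempty _ _)
  have hfnwd : ∀ k, IsNowhereDense (f k) := by
    intro k
    have : f k ∈ insert ∅ S := by rw [hf]; exact mem_range_self k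
    rcases this with h | h
    · rw [h]; exact isNowhereDense_empty
    · exact hSnwd _ h
  have hAsub : A ⊆ ⋃ k, f k := by
    intro x hx
    have := hSsub hx
    rw [← sUnion_range, ← hf]
    exact sUnion_subset_sUnion (subset_insert _ _) this
  set D : ℕ → Set C := fun k => (closure (f k))ᶜ with hD
  have hDo : ∀ k, IsOpen (D k) := fun k => isClosed_closure.isOpen_compl
  have hDd : ∀ k, Dense (D k) := fun k =>
    interior_eq_empty_iff_dense_compl.mp (hfnwd k)
  set D' : ℕ → Set C := fun j => ⋂ k ∈ Finset.range (j+1), D k with hD'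
  have hD'o : ∀ j, IsOpen (D' j) := fun j => isOpen_biInter_finset fun k _ => hDo k
  have hD'd : ∀ j, Dense (D' j) := by
    intro j
    induction j with
    | zero => simpa [hD'] using hDd 0
    | succ j ih =>
        have : D' (j+1) = D (j+1) ∩ D' j := by
          simp only [hD', Finset.range_add_one, Finset.set_biInter_insert]
        rw [this]
        exact (hDd (j+1)).inter_of_isOpen_left ih (hDo (j+1))
  have hstep : ∀ j N, ∃ M y, N < M ∧ ∀ x : C, agree x y N M → x ∈ D' j :=
    fun j N => sublB (hD'o j) (hD'd j) N
  choose Mf Yf hlt hin using hstep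
  set seq : ℕ → ℕ × C := fun j =>
    Nat.rec ((0 : ℕ), (fun _ => false : C)) (fun j p => (Mf j p.1, Yf j p.1)) j with hseq
  set m : ℕ → ℕ := fun j => (seq j).1 with hmdef
  have m0 : m 0 = 0 := rfl
  have hmlt : ∀ j, m j < m (j+1) := fun j => hlt j (m j)
  have hm : StrictMono m := strictMono_nat_of_lt_succ hmlt
  have hub : ∀ i : ℕ, ∃ j, i < m (j+1) := fun i =>
    ⟨i, lt_of_lt_of_le (Nat.lt_succ_self i) (hm.le_apply)⟩
  set bidx : ℕ → ℕ := fun i => sInf {j | i < m (j+1)} with hbi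
  have hbi_lt : ∀ i, i < m (bidx i + 1) := fun i => Nat.sInf_mem (hub i)
  have hbi_le : ∀ i, m (bidx i) ≤ i := by
    intro i
    cases h : bidx i with
    | zero => rw [m0]; exact Nat.zero_le i
    | succ k =>
        have h' : sInf {j | i < m (j+1)} = k + 1 := h
        have hk : k ∉ {j | i < m (j+1)} :=
          Nat.notMem_of_lt_sInf (h' ▸ Nat.lt_succ_self k)
        have hk2 : ¬ i < m (k+1) := hk
        omega
  have hbi_eq : ∀ i j, m j ≤ i → i < m (j+1) → bidx i = j := by
    intro i j h1 h2
    refine le_antisymm (Nat.sInf_le h2) ?_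
    by_contra hc
    push_neg at hc
    have : m (bidx i + 1) ≤ m j := hm.monotone (Nat.succ_le_of_lt hc)
    have := hbi_lt i
    omega
  set y : C := fun i => Yf (bidx i) (m (bidx i)) i with hy
  refine ⟨m, y, m0, hm, ?_⟩
  intro x hxA
  by_contra hx
  simp only [Mset, mem_setOf_eq, Filter.not_eventually, not_not] at hx
  obtain ⟨k, hk⟩ := mem_iUnion.mp (hAsub hxA)
  obtain ⟨j, hjk, hj⟩ := (frequently_atTop.mp hx) k
  -- x agrees with Yf j (m j) on block j, hence x ∈ D' j
  have hagree : agree x (Yf j (m j)) (m j) (m (j+1)) := by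
    intro i h1 h2
    have hbij : bidx i = j := hbi_eq i j h1 h2
    have := hj i h1 h2
    simp only [hy] at this
    rwa [hbij] at this
  have hxD' : x ∈ D' j := hin j (m j) x hagree
  have hxDk : x ∈ D k := by
    have : k ∈ Finset.range (j+1) := Finset.mem_range.mpr (by omega)
    exact mem_iInter₂.mp hxD' k this
  exact hxDk (subset_closure hk)

noncomputable def term (x : C) (n : ℕ) : ℝ := if x n = true then (2⁻¹ : ℝ)^(n+1) else 0

lemma term_nonneg (x : C) (n : ℕ) : 0 ≤ term x n := by
  unfold term; split <;> positivity

lemma term_le (x : C) (n : ℕ) : term x n ≤ (2⁻¹ : ℝ)^(n+1) := by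
  unfold term; split
  · exact le_refl _
  · positivity

lemma summable_bound : Summable (fun n : ℕ => (2⁻¹ : ℝ)^(n+1)) := by
  have : Summable (fun n : ℕ => (2⁻¹ : ℝ)^n) := by
    apply summable_geometric_of_lt_one <;> norm_num
  simpa [pow_succ] using this.mul_right (2⁻¹ : ℝ)

lemma tsum_bound : (∑' n : ℕ, (2⁻¹ : ℝ)^(n+1)) = 1 := by
  have h : (∑' n : ℕ, (2⁻¹ : ℝ)^n) = 2 := by
    have := tsum_geometric_two
    simpa [one_div] using this
  calc (∑' n : ℕ, (2⁻¹ : ℝ)^(n+1)) = ∑' n : ℕ, (2⁻¹ : ℝ)^n * 2⁻¹ := by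
        simp [pow_succ]
    _ = (∑' n : ℕ, (2⁻¹ : ℝ)^n) * 2⁻¹ := tsum_mul_right
    _ = 1 := by rw [h]; norm_num

lemma summable_term (x : C) : Summable (term x) :=
  Summable.of_nonneg_of_le (term_nonneg x) (term_le x) summable_bound

noncomputable def phi (x : C) : ℝ := ∑' n, term x n

lemma continuous_phi : Continuous phi := by
  apply continuous_tsum (u := fun n : ℕ => (2⁻¹ : ℝ)^(n+1))
  · intro i
    have : (fun x : C => term x i) = (fun b : Bool => if b = true then (2⁻¹ : ℝ)^(i+1) else 0) ∘ (fun x : C => x i) := rfl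
    rw [this]
    exact (continuous_of_discreteTopology).comp (continuous_apply i)
  · exact summable_bound
  · intro n x
    rw [Real.norm_eq_abs, abs_of_nonneg (term_nonneg x n)]
    exact term_le x n

lemma tail_nonneg (x : C) (n : ℕ) : 0 ≤ ∑' k, term x (k + n) :=
  tsum_nonneg fun k => term_nonneg x _

lemma summable_tail (x : C) (n : ℕ) : Summable (fun k => term x (k + n)) :=
  (summable_nat_add_iff n).mpr (summable_term x)

lemma summable_bound_tail (n : ℕ) : Summable (fun k : ℕ => (2⁻¹ : ℝ)^(k + n + 1)) := by
  have h := (summable_nat_add_iff (f := fun k : ℕ => (2⁻¹ : ℝ)^(k+1)) n).mpr summable_bound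
  have : (fun k : ℕ => (2⁻¹ : ℝ)^(k + n + 1)) = fun k : ℕ => (2⁻¹ : ℝ)^((k + n) + 1) := by
    ext k; congr 1
  rw [this]; exact h

lemma tail_le (x : C) (n : ℕ) : (∑' k, term x (k + n)) ≤ (2⁻¹ : ℝ)^n := by
  have h1 : (∑' k, term x (k + n)) ≤ ∑' k : ℕ, (2⁻¹ : ℝ)^(k + n + 1) :=
    Summable.tsum_le_tsum (fun k => term_le x (k+n)) (summable_tail x n) (summable_bound_tail n)
  have h2 : (∑' k : ℕ, (2⁻¹ : ℝ)^(k + n + 1)) = (2⁻¹ : ℝ)^n := by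
    calc (∑' k : ℕ, (2⁻¹ : ℝ)^(k + n + 1)) = ∑' k : ℕ, (2⁻¹:ℝ)^(k+1) * (2⁻¹:ℝ)^n := by
          congr 1; ext k; rw [← pow_add]; congr 1; ring
      _ = (∑' k : ℕ, (2⁻¹:ℝ)^(k+1)) * (2⁻¹:ℝ)^n := tsum_mul_right
      _ = (2⁻¹ : ℝ)^n := by rw [tsum_bound, one_mul]
  linarith

lemma phi_split (x : C) (n : ℕ) :
    phi x = (∑ i ∈ Finset.range n, term x i) + ∑' k, term x (k + n) :=
  ((summable_term x).sum_add_tsum_nat_add n).symm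

lemma phi_nonneg (x : C) : 0 ≤ phi x := tsum_nonneg fun n => term_nonneg x n

lemma phi_le_one (x : C) : phi x ≤ 1 := by
  have := Summable.tsum_le_tsum (term_le x) (summable_term x) summable_bound
  rwa [tsum_bound] at this

lemma phi_agree_close {x z : C} {n : ℕ} (h : ∀ i, i < n → x i = z i) :
    |phi x - phi z| ≤ (2⁻¹ : ℝ)^n := by
  have hx := phi_split x n
  have hz := phi_split z n
  have hsum : (∑ i ∈ Finset.range n, term x i) = ∑ i ∈ Finset.range n, term z i := by
    apply Finset.sum_congr rfl
    intro i hi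
    unfold term
    rw [h i (Finset.mem_range.mp hi)]
  have h1 := tail_nonneg x n
  have h2 := tail_le x n
  have h3 := tail_nonneg z n
  have h4 := tail_le z n
  rw [abs_le]
  constructor <;> [skip; skip] <;> rw [hx, hz, hsum] <;> linarith

open scoped Classical in
/-- greedy binary expansion with a prescribed prefix -/
lemma exists_phi_eq (p : C) (n : ℕ) (r : ℝ) (h0 : 0 ≤ r) (h1 : r ≤ (2⁻¹ : ℝ)^n) :
    ∃ x : C, (∀ i, i < n → x i = p i) ∧ phi x = (∑ i ∈ Finset.range n, term p i) + r := by
  -- remainders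
  set rem : ℕ → ℝ := fun k => Nat.rec r
    (fun k rk => if (2⁻¹ : ℝ)^(n+k+1) ≤ rk then rk - (2⁻¹)^(n+k+1) else rk) k with hrem
  have hrem0 : rem 0 = r := rfl
  have hrems : ∀ k, rem (k+1) = if (2⁻¹ : ℝ)^(n+k+1) ≤ rem k then rem k - (2⁻¹)^(n+k+1) else rem k :=
    fun k => rfl
  have hinv : ∀ k, 0 ≤ rem k ∧ rem k ≤ (2⁻¹ : ℝ)^(n+k) := by
    intro k
    induction k with
    | zero => exact ⟨h0, h1⟩
    | succ k ih =>
        rw [hrems k, show n + (k+1) = n + k + 1 by omega]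
        have hp : (0:ℝ) < (2⁻¹ : ℝ)^(n+k+1) := by positivity
        have hhalf : (2⁻¹ : ℝ)^(n+k+1) = (2⁻¹ : ℝ)^(n+k) * 2⁻¹ := by rw [pow_succ]
        split
        · constructor
          · linarith
          · have := ih.2; rw [hhalf] at *; linarith
        · exact ⟨ih.1, by push_neg at *; linarith [le_of_lt (by assumption : rem k < (2⁻¹:ℝ)^(n+k+1))]⟩
  set x : C := fun i => if h : i < n then p i else
      decide ((2⁻¹ : ℝ)^(i+1) ≤ rem (i - n)) with hx
  have hxp : ∀ i, i < n → x i = p i := by intro i hi; simp [hx, hi]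
  have hxval : ∀ k, x (n + k) = decide ((2⁻¹ : ℝ)^(n+k+1) ≤ rem k) := by
    intro k
    have h1 : ¬ (n + k < n) := by omega
    simp [hx, h1]
  have hpartial : ∀ k, (∑ i ∈ Finset.range k, term x (n + i)) = r - rem k := by
    intro k
    induction k with
    | zero => simp [hrem0]
    | succ k ih =>
        rw [Finset.sum_range_succ, ih, hrems k]
        have : term x (n + k) = if (2⁻¹ : ℝ)^(n+k+1) ≤ rem k then (2⁻¹:ℝ)^(n+k+1) else 0 := by
          unfold term
          rw [hxval k]
          by_cases hc : (2⁻¹ : ℝ)^(n+k+1) ≤ rem k <;> simp [hc]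
        rw [this]
        split <;> ring
  have hrtend : Tendsto rem atTop (nhds 0) := by
    apply squeeze_zero (fun k => (hinv k).1) (fun k => (hinv k).2)
    have h2 : Tendsto (fun k : ℕ => (2⁻¹ : ℝ)^k) atTop (nhds 0) := by
      apply tendsto_pow_atTop_nhds_zero_of_lt_one <;> norm_num
    have := h2.comp (tendsto_add_atTop_nat n)
    simpa [Function.comp_def, add_comm] using this
  have hhs : HasSum (fun k => term x (n + k)) r := by
    rw [hasSum_iff_tendsto_nat_of_nonneg (fun i => term_nonneg x (n+i)) r]
    have : (fun k => ∑ i ∈ Finset.range k, term x (n + i)) = fun k => r - rem k := by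
      ext k; exact hpartial k
    rw [this]
    simpa using (tendsto_const_nhds (x := r)).sub hrtend
  refine ⟨x, hxp, ?_⟩
  rw [phi_split x n]
  have htail : (∑' k, term x (k + n)) = r := by
    have : (fun k => term x (k + n)) = fun k => term x (n + k) := by ext k; rw [add_comm]
    rw [this]
    exact hhs.tsum_eq
  have hhead : (∑ i ∈ Finset.range n, term x i) = ∑ i ∈ Finset.range n, term p i := by
    apply Finset.sum_congr rfl
    intro i hi
    unfold term
    rw [hxp i (Finset.mem_range.mp hi)]
  rw [htail, hhead]

/-- injectivity of `phi` at points that are not eventually constant -/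
lemma phi_inj {w z : C} (htrue : ∀ N, ∃ k, N ≤ k ∧ z k = true)
    (hfalse : ∀ N, ∃ k, N ≤ k ∧ z k = false) (heq : phi w = phi z) : w = z := by
  by_contra hne
  have hex : ∃ n, w n ≠ z n := by
    by_contra h; push_neg at h; exact hne (funext h)
  classical
  set n := Nat.find hex with hn
  have hdiff : w n ≠ z n := Nat.find_spec hex
  have hagree : ∀ i, i < n → w i = z i := fun i hi => by
    have := Nat.find_min hex hi; push_neg at this; exact this
  have hsw := phi_split w (n+1)
  have hsz := phi_split z (n+1)
  have hheads : ∀ i ∈ Finset.range n, term w i = term z i := by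
    intro i hi
    unfold term; rw [hagree i (Finset.mem_range.mp hi)]
  have hsum : (∑ i ∈ Finset.range (n+1), term w i)
      = (∑ i ∈ Finset.range n, term w i) + term w n := Finset.sum_range_succ _ _
  have hsumz : (∑ i ∈ Finset.range (n+1), term z i)
      = (∑ i ∈ Finset.range n, term z i) + term z n := Finset.sum_range_succ _ _
  have hEq : term w n + (∑' k, term w (k + (n+1))) = term z n + ∑' k, term z (k + (n+1)) := by
    have := heq
    rw [hsw, hsz, hsum, hsumz, Finset.sum_congr rfl hheads] at this
    linarith
  -- case on which side has `true` at n
  have key : ∀ u v : C, u n = true → v n = false →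
      term u n + (∑' k, term u (k + (n+1))) = term v n + (∑' k, term v (k + (n+1))) →
      (∑' k, term v (k + (n+1))) = (2⁻¹:ℝ)^(n+1) := by
    intro u v hu hv h
    have h1 : term u n = (2⁻¹:ℝ)^(n+1) := by unfold term; simp [hu]
    have h2 : term v n = 0 := by unfold term; simp [hv]
    have h3 := tail_nonneg u (n+1)
    have h4 := tail_le v (n+1)
    rw [h1, h2, zero_add] at h
    linarith
  have tailmax : ∀ v : C, (∑' k, term v (k + (n+1))) = (2⁻¹:ℝ)^(n+1) →
      ∀ k, v (n+1+k) = true := by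
    intro v hv k
    by_contra hk
    have hlt : term v (k + (n+1)) < (2⁻¹:ℝ)^((k+(n+1))+1) := by
      unfold term
      have : ¬ v (k + (n+1)) = true := by rwa [add_comm k (n+1)]
      simp only [this, if_false]
      positivity
    have := Summable.tsum_lt_tsum_of_nonneg (fun b => term_nonneg v (b + (n+1)))
      (fun b => term_le v (b + (n+1))) hlt (summable_bound_tail (n+1))
    have heq2 : (∑' k : ℕ, (2⁻¹ : ℝ)^(k + (n+1) + 1)) = (2⁻¹ : ℝ)^(n+1) := by
      calc (∑' k : ℕ, (2⁻¹ : ℝ)^(k + (n+1) + 1)) = ∑' k : ℕ, (2⁻¹:ℝ)^(k+1) * (2⁻¹:ℝ)^(n+1) := by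
            congr 1; ext k; rw [← pow_add]; congr 1; ring
        _ = (∑' k : ℕ, (2⁻¹:ℝ)^(k+1)) * (2⁻¹:ℝ)^(n+1) := tsum_mul_right
        _ = (2⁻¹ : ℝ)^(n+1) := by rw [tsum_bound, one_mul]
    rw [hv, heq2] at this
    exact lt_irrefl _ this
  have tailzero : ∀ v : C, term v n + (∑' k, term v (k + (n+1))) = (2⁻¹:ℝ)^(n+1) → v n = true →
      ∀ k, v (n+1+k) = false := by
    intro v hv hvn k
    by_contra hk
    have hvn' : term v n = (2⁻¹:ℝ)^(n+1) := by unfold term; simp [hvn]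
    have htail0 : (∑' k, term v (k + (n+1))) = 0 := by linarith
    have hpos : 0 < term v (k + (n+1)) := by
      unfold term
      have : v (k + (n+1)) = true := by
        rw [add_comm k (n+1)]; simpa using hk
      simp only [this, if_true]
      positivity
    have hle : term v (k + (n+1)) ≤ ∑' k, term v (k + (n+1)) :=
      Summable.le_tsum (summable_tail v (n+1)) k (fun b _ => term_nonneg v (b + (n+1)))
    rw [htail0] at hle
    linarith
  cases hw : w n with
  | true =>
      have hz1 : z n = false := by
        cases hz' : z n
        · rfl
        · exact absurd (hw.trans hz'.symm) hdiff
      -- z is eventually true : contradiction with hfalse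
      have := key w z hw hz1 hEq
      have hall := tailmax z this
      obtain ⟨k, hk1, hk2⟩ := hfalse (n+1)
      have : z (n+1+(k-(n+1))) = true := hall _
      rw [show n+1+(k-(n+1)) = k by omega] at this
      rw [this] at hk2; exact Bool.noConfusion hk2
  | false =>
      have hz1 : z n = true := by
        cases hz' : z n
        · exact absurd (hw.trans hz'.symm) hdiff
        · rfl
      have := key z w hz1 hw hEq.symm
      -- now w's tail is max?? no: key gives tail of w = max, so (from hEq) z side: term z n = 2^-(n+1), tail z = 0
      have hzn : term z n = (2⁻¹:ℝ)^(n+1) := by unfold term; simp [hz1]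
      have hzzero : term z n + (∑' k, term z (k + (n+1))) = (2⁻¹:ℝ)^(n+1) := by
        have hwn : term w n = 0 := by unfold term; simp [hw]
        rw [hEq.symm] at *
        rw [hwn, zero_add] at *
        -- hEq : term w n + tail w = term z n + tail z ; with this : tail w = 2^-(n+1)
        -- so term z n + tail z = 0 + tail w = 2^-(n+1)
        linarith [hEq, this]
      have hall := tailzero z hzzero hz1
      obtain ⟨k, hk1, hk2⟩ := htrue (n+1)
      have : z (n+1+(k-(n+1))) = false := hall _
      rw [show n+1+(k-(n+1)) = k by omega] at this
      rw [this] at hk2; exact Bool.noConfusion hk2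

/-- modification of `z` beyond `m` to an alternating tail -/
noncomputable def altTail (z : C) (m : ℕ) : C := fun i => if i ≤ m then z i else decide (i % 2 = 0)

lemma altTail_agree (z : C) (m : ℕ) : ∀ i, i ≤ m → altTail z m i = z i := by
  intro i hi; simp [altTail, hi]

lemma altTail_true (z : C) (m : ℕ) : ∀ N, ∃ k, N ≤ k ∧ altTail z m k = true := by
  intro N
  refine ⟨2 * (max N (m+1)), by omega, ?_⟩
  have h1 : ¬ (2 * (max N (m+1)) ≤ m) := by
    have := le_max_right N (m+1); omega
  simp [altTail, h1, Nat.mul_mod_right]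

lemma altTail_false (z : C) (m : ℕ) : ∀ N, ∃ k, N ≤ k ∧ altTail z m k = false := by
  intro N
  refine ⟨2 * (max N (m+1)) + 1, by omega, ?_⟩
  have h1 : ¬ (2 * (max N (m+1)) + 1 ≤ m) := by
    have := le_max_right N (m+1); omega
  have h2 : (2 * (max N (m+1)) + 1) % 2 = 1 := by omega
  simp [altTail, h1, h2]

lemma altTail_tendsto (z : C) : Tendsto (fun m => altTail z m) atTop (nhds z) := by
  rw [tendsto_pi_nhds]
  intro i
  apply Tendsto.congr' (_ : (fun _ => z i) =ᶠ[atTop] fun m => altTail z m i) tendsto_const_nhds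
  filter_upwards [eventually_ge_atTop i] with m hm
  simp [altTail, hm]

lemma cylinder_subset_of_closed {K : Set C} (hK : IsClosed K) {x₀ : C} {n : ℕ}
    (h : ∀ w : C, (∀ i, i < n → w i = x₀ i) →
      (∀ N, ∃ k, N ≤ k ∧ w k = true) → (∀ N, ∃ k, N ≤ k ∧ w k = false) → w ∈ K) :
    ∀ z : C, (∀ i, i < n → z i = x₀ i) → z ∈ K := by
  intro z hz
  apply hK.mem_of_tendsto (altTail_tendsto z)
  filter_upwards [eventually_ge_atTop n] with m hm
  apply h (altTail z m) _ (altTail_true z m) (altTail_false z m)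
  intro i hi
  rw [altTail_agree z m i (by omega)]
  exact hz i hi

lemma push_nwd {K : Set C} (hKc : IsClosed K) (hK : IsNowhereDense K) :
    IsNowhereDense (phi '' K) := by
  have hcpt : IsCompact (phi '' K) := (hKc.isCompact).image continuous_phi
  have hclosed : IsClosed (phi '' K) := hcpt.isClosed
  rw [hclosed.isNowhereDense_iff]
  rw [eq_empty_iff_forall_notMem]
  intro r hr
  obtain ⟨ε, hε, hball⟩ := Metric.mem_nhds_iff.mp (mem_interior_iff_mem_nhds.mp hr)
  have hrK : r ∈ phi '' K := interior_subset hr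
  obtain ⟨x₀, hx₀K, hphix₀⟩ := hrK
  obtain ⟨n, hn⟩ := exists_pow_lt_of_lt_one hε (by norm_num : (2⁻¹ : ℝ) < 1)
  have hcyl : ∀ z : C, (∀ i, i < n → z i = x₀ i) → z ∈ K := by
    apply cylinder_subset_of_closed hKc
    intro w hw htrue hfalse
    have hdist : |phi w - phi x₀| ≤ (2⁻¹ : ℝ)^n := phi_agree_close hw
    have : phi w ∈ Metric.ball r ε := by
      rw [Metric.mem_ball, Real.dist_eq, ← hphix₀]
      exact lt_of_le_of_lt hdist hn
    obtain ⟨v, hvK, hv⟩ := hball this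
    have := phi_inj htrue hfalse hv
    rwa [this] at hvK
  -- so K contains a nonempty open cylinder: contradicts nowhere density
  have hin : x₀ ∈ interior K := by
    have hcylopen : IsOpen {z : C | ∀ i, i < n → z i = x₀ i} := by
      have : {z : C | ∀ i, i < n → z i = x₀ i} = {z : C | agree z x₀ 0 n} := by
        ext z; constructor
        · intro h i _ h2; exact h i h2
        · intro h i h2; exact h i (Nat.zero_le i) h2
      rw [this]; exact isOpen_agree x₀ 0 n
    exact interior_maximal hcyl hcylopen (show x₀ ∈ _ from fun i _ => rfl)
  rw [hKc.isNowhereDense_iff] at hK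
  rw [hK] at hin
  exact hin

lemma pull_nwd {t : Set ℝ} (ht : IsNowhereDense t) :
    IsNowhereDense (phi ⁻¹' (_root_.closure t)) := by
  have hclosed : IsClosed (phi ⁻¹' (_root_.closure t)) :=
    isClosed_closure.preimage continuous_phi
  rw [hclosed.isNowhereDense_iff, eq_empty_iff_forall_notMem]
  intro x hx
  obtain ⟨n, hn⟩ := exists_cyl isOpen_interior hx
  set c : ℝ := ∑ i ∈ Finset.range n, term x i with hc
  have hsub : Set.Icc c (c + (2⁻¹:ℝ)^n) ⊆ _root_.closure t := by
    intro s hs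
    obtain ⟨x', hx'pre, hx'phi⟩ := exists_phi_eq x n (s - c) (by linarith [hs.1]) (by linarith [hs.2])
    have : x' ∈ interior (phi ⁻¹' (_root_.closure t)) := hn x' hx'pre
    have := interior_subset this
    rw [mem_preimage] at this
    rw [hx'phi] at this
    convert this using 2
    ring
  have hIoo : Set.Ioo c (c + (2⁻¹:ℝ)^n) ⊆ interior (_root_.closure t) :=
    interior_maximal (subset_trans Set.Ioo_subset_Icc_self hsub) isOpen_Ioo
  have hne : (Set.Ioo c (c + (2⁻¹:ℝ)^n)).Nonempty := by
    apply Set.nonempty_Ioo.mpr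
    have : (0:ℝ) < (2⁻¹:ℝ)^n := by positivity
    linarith
  obtain ⟨s, hs⟩ := hne
  exact absurd (hIoo hs) (by rw [ht]; exact notMem_empty s)

lemma isMeagre_preimage_phi {A : Set ℝ} (hA : IsMeagre A) : IsMeagre (phi ⁻¹' A) := by
  obtain ⟨S, hSnwd, hScnt, hSsub⟩ := isMeagre_iff_countable_union_isNowhereDense.mp hA
  rw [isMeagre_iff_countable_union_isNowhereDense]
  refine ⟨(fun t => phi ⁻¹' (_root_.closure t)) '' S, ?_, hScnt.image _, ?_⟩
  · rintro _ ⟨t, ht, rfl⟩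
    exact pull_nwd (hSnwd t ht)
  · intro x hx
    obtain ⟨t, ht, hxt⟩ := hSsub hx
    exact ⟨phi ⁻¹' (_root_.closure t), ⟨t, ht, rfl⟩, by
      rw [mem_preimage]; exact subset_closure hxt⟩

lemma isMeagre_image_phi {B : Set C} (hB : IsMeagre B) : IsMeagre (phi '' B) := by
  obtain ⟨S, hSnwd, hScnt, hSsub⟩ := isMeagre_iff_countable_union_isNowhereDense.mp hB
  rw [isMeagre_iff_countable_union_isNowhereDense]
  refine ⟨(fun t => phi '' (_root_.closure t)) '' S, ?_, hScnt.image _, ?_⟩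
  · rintro _ ⟨t, ht, rfl⟩
    exact push_nwd isClosed_closure (hSnwd t ht).closure
  · rintro _ ⟨x, hx, rfl⟩
    obtain ⟨t, ht, hxt⟩ := hSsub hx
    exact ⟨phi '' (_root_.closure t), ⟨t, ht, rfl⟩, ⟨x, subset_closure hxt, rfl⟩⟩

lemma isMeagre_image_homeo {X Y : Type*} [TopologicalSpace X] [TopologicalSpace Y]
    (h : X ≃ₜ Y) {s : Set X} (hs : IsMeagre s) : IsMeagre (h '' s) := by
  obtain ⟨S, hSnwd, hScnt, hSsub⟩ := isMeagre_iff_countable_union_isNowhereDense.mp hs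
  rw [isMeagre_iff_countable_union_isNowhereDense]
  refine ⟨(fun t => h '' t) '' S, ?_, hScnt.image _, ?_⟩
  · rintro _ ⟨t, ht, rfl⟩
    have := hSnwd t ht
    unfold IsNowhereDense at *
    rw [← h.image_closure, ← h.image_interior, this, image_empty]
  · rintro _ ⟨x, hx, rfl⟩
    obtain ⟨t, ht, hxt⟩ := hSsub hx
    exact ⟨h '' t, ⟨t, ht, rfl⟩, ⟨x, hxt, rfl⟩⟩

/-! block index machinery -/

noncomputable def bi (m : ℕ → ℕ) (i : ℕ) : ℕ := sInf {j | i < m (j + 1)}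

lemma bi_lt {m : ℕ → ℕ} (hm : StrictMono m) (i : ℕ) : i < m (bi m i + 1) := by
  have h : {j | i < m (j + 1)}.Nonempty :=
    ⟨i, show i < m (i + 1) from lt_of_lt_of_le (Nat.lt_succ_self i) hm.le_apply⟩
  exact (show bi m i ∈ {j | i < m (j + 1)} from Nat.sInf_mem h)

lemma bi_le {m : ℕ → ℕ} (hm : StrictMono m) (m0 : m 0 = 0) (i : ℕ) : m (bi m i) ≤ i := by
  cases h : bi m i with
  | zero => rw [m0]; exact Nat.zero_le i
  | succ k =>
      have h' : sInf {j | i < m (j + 1)} = k + 1 := h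
      have hk : k ∉ {j | i < m (j + 1)} := Nat.notMem_of_lt_sInf (h' ▸ Nat.lt_succ_self k)
      have hk2 : ¬ i < m (k + 1) := hk
      omega

lemma bi_eq {m : ℕ → ℕ} (hm : StrictMono m) {i j : ℕ}
    (h1 : m j ≤ i) (h2 : i < m (j + 1)) : bi m i = j := by
  refine le_antisymm (Nat.sInf_le h2) ?_
  by_contra hc
  push_neg at hc
  have h3 : m (bi m i + 1) ≤ m j := hm.monotone (Nat.succ_le_of_lt hc)
  have h4 := bi_lt hm i
  omega

lemma bi_ge {m : ℕ → ℕ} (hm : StrictMono m) {i J : ℕ} (h : m J ≤ i) : J ≤ bi m i := by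
  by_contra hc
  push_neg at hc
  have : m (bi m i + 1) ≤ m J := hm.monotone (Nat.succ_le_of_lt hc)
  have := bi_lt hm i
  omega

/-! step partitions -/

def stepPart (g : ℕ → ℕ) : ℕ → ℕ := fun j => Nat.rec 0 (fun _ a => a + g a + 1) j

lemma stepPart_zero (g : ℕ → ℕ) : stepPart g 0 = 0 := rfl

lemma stepPart_succ (g : ℕ → ℕ) (j : ℕ) :
    stepPart g (j + 1) = stepPart g j + g (stepPart g j) + 1 := rfl

lemma stepPart_strictMono (g : ℕ → ℕ) : StrictMono (stepPart g) :=
  strictMono_nat_of_lt_succ fun j => by rw [stepPart_succ]; omega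

/-! ### Direction 3 core: a small union of meager sets in C is meager -/

lemma core_cov {ι : Type} (A : ι → Set C)
    (hb : ∀ e : ι → ℕ → ℕ, ∃ g : ℕ → ℕ, ∀ β, ∀ᶠ n in atTop, e β n ≤ g n)
    (hcov : ∀ B : ι → Set C, (∀ β, IsMeagre (B β)) → ∃ w : C, ∀ β, w ∉ B β)
    (hA : ∀ β, IsMeagre (A β)) : IsMeagre (⋃ β, A β) := by
  classical
  -- canonical covers of each A β
  choose mb yb mb0 mbSM hsub using fun β => exists_Mset_superset (hA β)
  -- Step 1: a partition m each of whose (eventual) blocks contains a full β-block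
  obtain ⟨g, hg⟩ := hb (fun β n => mb β (bi (mb β) n + 2))
  set m : ℕ → ℕ := stepPart g with hmdef
  have hm : StrictMono m := stepPart_strictMono g
  have hm0 : m 0 = 0 := rfl
  have step1 : ∀ β, ∀ᶠ j in atTop, ∃ k,
      m j ≤ mb β k ∧ mb β (k + 1) ≤ m (j + 1) := by
    intro β
    obtain ⟨N, hN⟩ := eventually_atTop.mp (hg β)
    rw [eventually_atTop]
    refine ⟨N, fun j hj => ?_⟩
    have hmjN : N ≤ m j := le_trans hj hm.le_apply
    have hbound := hN (m j) hmjN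
    refine ⟨bi (mb β) (m j) + 1, ?_, ?_⟩
    · exact le_of_lt (bi_lt (mbSM β) (m j))
    · calc mb β (bi (mb β) (m j) + 1 + 1) ≤ g (m j) := hbound
        _ ≤ m (j + 1) := by
            have h2 : m (j + 1) = m j + g (m j) + 1 := stepPart_succ g j
            omega
  -- Step 2: a single w frequently matching each yb β on m-blocks
  obtain ⟨w, hw⟩ := hcov (fun β => Mset m (yb β)) (fun β => isMeagre_Mset hm (yb β))
  have hwfreq : ∀ β, ∀ N, ∃ j, N ≤ j ∧ agree w (yb β) (m j) (m (j + 1)) := by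
    intro β N
    have := hw β
    simp only [Mset, mem_setOf_eq, Filter.not_eventually, not_not] at this
    obtain ⟨j, hj1, hj2⟩ := frequently_atTop.mp this N
    exact ⟨j, hj1, hj2⟩
  choose jc hjc1 hjc2 using hwfreq
  -- Step 3: a coarser partition m' each of whose (eventual) blocks contains a
  -- full matching m-block for each β
  obtain ⟨g', hg'⟩ := hb (fun β n => m (jc β (bi m n + 1) + 1))
  set m' : ℕ → ℕ := stepPart g' with hm'def
  have hm' : StrictMono m' := stepPart_strictMono g'
  -- conclusion
  have hfinal : (⋃ β, A β) ⊆ Mset m' w := by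
    intro x hx
    simp only [mem_iUnion] at hx
    obtain ⟨β, hxβ⟩ := hx
    by_contra hxM
    -- x frequently agrees with w on m'-blocks
    simp only [Mset, mem_setOf_eq, Filter.not_eventually, not_not] at hxM
    have hxfreq := frequently_atTop.mp hxM
    -- x ∈ A β ⊆ Mset (mb β) (yb β): eventually disagreeing with yb β on β-blocks
    have hxMb : x ∈ Mset (mb β) (yb β) := hsub β hxβ
    simp only [Mset, mem_setOf_eq, eventually_atTop] at hxMb
    obtain ⟨K, hK⟩ := hxMb
    -- thresholds
    obtain ⟨N', hN'⟩ := eventually_atTop.mp (hg' β)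
    obtain ⟨J₀, hJ₀⟩ := eventually_atTop.mp (step1 β)
    -- choose a large i with agreement on m'-block i
    obtain ⟨i, hiN, hagr⟩ := hxfreq (max (max N' (mb β K)) (m J₀))
    have hmi : max (max N' (mb β K)) (m J₀) ≤ m' i := le_trans hiN hm'.le_apply
    -- the m-block j inside m'-block i
    set j := jc β (bi m (m' i) + 1) with hjdef
    have hj1 : bi m (m' i) + 1 ≤ j := hjc1 β _
    have hmj1 : m' i ≤ m j := by
      have h1 : m' i < m (bi m (m' i) + 1) := bi_lt hm (m' i)
      exact le_trans (le_of_lt h1) (hm.monotone hj1)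
    have hmj2 : m (j + 1) ≤ m' (i + 1) := by
      have h1 : m (j + 1) ≤ g' (m' i) := hN' (m' i) (le_trans (le_trans (le_max_left _ _) (le_max_left _ _)) hmi)
      have h2 : m' (i + 1) = m' i + g' (m' i) + 1 := stepPart_succ g' i
      omega
    -- x agrees with yb β on the m-block j
    have hxyb : agree x (yb β) (m j) (m (j + 1)) := by
      intro l hl1 hl2
      have hxw : x l = w l := hagr l (le_trans hmj1 hl1) (lt_of_lt_of_le hl2 hmj2)
      have hwy : w l = yb β l := hjc2 β (bi m (m' i) + 1) l hl1 hl2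
      rw [hxw, hwy]
    -- the β-block k inside the m-block j
    have hjJ₀ : J₀ ≤ j := by
      have : J₀ ≤ bi m (m' i) := bi_ge hm (le_trans (le_max_right _ _) hmi)
      omega
    obtain ⟨k, hk1, hk2⟩ := hJ₀ j hjJ₀
    -- x agrees with yb β on the β-block k
    have hxk : agree x (yb β) (mb β k) (mb β (k + 1)) := fun l hl1 hl2 =>
      hxyb l (le_trans hk1 hl1) (lt_of_lt_of_le hl2 hk2)
    -- k is large
    have hkK : K ≤ k := by
      have h1 : mb β K ≤ mb β k :=
        le_trans (le_trans (le_max_right _ _) (le_max_left _ _)) (le_trans hmi (le_trans hmj1 hk1))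
      exact (mbSM β).le_iff_le.mp h1
    exact hK k hkK hxk
  exact (isMeagre_Mset hm' w).mono hfinal

/-! ### Direction 2 core: an unbounded family gives meager sets with nonmeager union -/

def finc (f : ℕ → ℕ) (n : ℕ) : ℕ := n + 1 + (Finset.range (n + 1)).sup f

lemma finc_ge (f : ℕ → ℕ) (n : ℕ) : f n ≤ finc f n := by
  have : f n ≤ (Finset.range (n + 1)).sup f :=
    Finset.le_sup (Finset.mem_range.mpr (Nat.lt_succ_self n))
  unfold finc; omega

lemma finc_mono (f : ℕ → ℕ) : Monotone (finc f) := by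
  intro a b hab
  unfold finc
  have : (Finset.range (a + 1)).sup f ≤ (Finset.range (b + 1)).sup f :=
    Finset.sup_mono (Finset.range_subset_range.mpr (by omega))
  omega

lemma core_b {F : Set (ℕ → ℕ)} (hF : ∀ g : ℕ → ℕ, ∃ f ∈ F, ¬ ∀ᶠ n in atTop, f n ≤ g n) :
    ¬ IsMeagre (⋃ f ∈ F, Mset (stepPart (finc f)) (fun _ => false)) := by
  classical
  intro hmeag
  obtain ⟨m, y, m0, hm, hsub⟩ := exists_Mset_superset hmeag
  have good : ∀ f ∈ F, ∀ᶠ j in atTop, ∃ k,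
      m j ≤ stepPart (finc f) k ∧ stepPart (finc f) (k + 1) ≤ m (j + 1) := by
    intro f hf
    set p : ℕ → ℕ := stepPart (finc f) with hp
    have hpSM : StrictMono p := stepPart_strictMono (finc f)
    by_contra hbad
    rw [Filter.not_eventually] at hbad
    have hfr : ∀ N, ∃ j, N ≤ j ∧ ¬ ∃ k, m j ≤ p k ∧ p (k + 1) ≤ m (j + 1) :=
      fun N => frequently_atTop.mp hbad N
    choose tf htf1 htf2 using hfr
    set t : ℕ → ℕ := fun n => Nat.rec (tf 0) (fun _ a => tf (a + 2)) n with ht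
    have hts : ∀ n, t (n + 1) = tf (t n + 2) := fun n => rfl
    have htstep : ∀ n, t n + 2 ≤ t (n + 1) := fun n => by rw [hts]; exact htf1 _
    have htmono : StrictMono t := strictMono_nat_of_lt_succ fun n => by
      have := htstep n; omega
    have htge : ∀ n, n ≤ t n := fun n => htmono.le_apply
    have htbad : ∀ n, ¬ ∃ k, m (t n) ≤ p k ∧ p (k + 1) ≤ m (t n + 1) := by
      intro n
      cases n with
      | zero => exact htf2 0
      | succ n => rw [hts]; exact htf2 _
    set x : C := fun i => if ∃ n, bi m i = t n then y i else true with hx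
    have hxS : x ∉ Mset m y := by
      simp only [Mset, mem_setOf_eq, Filter.not_eventually, not_not]
      rw [frequently_atTop]
      intro N
      refine ⟨t N, htge N, ?_⟩
      intro i h1 h2
      have hbi : bi m i = t N := bi_eq hm h1 h2
      simp only [hx]
      exact if_pos ⟨N, hbi⟩
    have hxf : x ∉ Mset p (fun _ => false) := by
      intro h
      exact hxS (hsub (mem_biUnion hf h))
    simp only [Mset, mem_setOf_eq, Filter.not_eventually, not_not] at hxf
    obtain ⟨k, -, hk⟩ := frequently_atTop.mp hxf 0
    -- the f-block k is all-false for x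
    have hxfalse : ∀ i, p k ≤ i → i < p (k + 1) → x i = false := by
      intro i h1 h2
      exact hk i h1 h2
    have hcond : ∀ i, p k ≤ i → i < p (k + 1) → ∃ n, bi m i = t n := by
      intro i h1 h2
      by_contra hc
      have := hxfalse i h1 h2
      simp only [hx] at this
      rw [if_neg hc] at this
      exact Bool.noConfusion this
    have hpk : p k < p (k + 1) := hpSM (Nat.lt_succ_self k)
    obtain ⟨n₀, hn₀⟩ := hcond (p k) le_rfl hpk
    -- all of the f-block lies in the m-block t n₀
    have hup : ∀ i, p k ≤ i → i < p (k + 1) → i < m (t n₀ + 1) := by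
      intro i h1 h2
      by_contra hc
      push_neg at hc
      set i' := m (t n₀ + 1) with hi'
      have hi'block : p k ≤ i' ∧ i' < p (k + 1) := by
        constructor
        · have := bi_lt hm (p k); rw [hn₀] at this; omega
        · omega
      obtain ⟨n', hn'⟩ := hcond i' hi'block.1 hi'block.2
      have hbi' : bi m i' = t n₀ + 1 := bi_eq hm le_rfl (hm (Nat.lt_succ_self (t n₀ + 1)))
      rw [hbi'] at hn'
      -- t n' = t n₀ + 1 is impossible
      rcases lt_trichotomy n' n₀ with h | h | h
      · have : t n' < t n₀ := htmono h
        omega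
      · rw [h] at hn'; omega
      · have := htstep n₀
        have h2 : t (n₀ + 1) ≤ t n' := htmono.monotone h
        omega
    refine htbad n₀ ⟨k, ?_, ?_⟩
    · have := bi_le hm m0 (p k); rw [hn₀] at this; exact this
    · -- p (k+1) ≤ m (t n₀ + 1)
      have h1 : p (k + 1) - 1 < m (t n₀ + 1) := hup (p (k + 1) - 1) (by omega) (by omega)
      omega
  -- now use the unbounded family to contradict `good`
  obtain ⟨f, hf, hfg⟩ := hF (fun n => m (bi m n + 2))
  apply hfg
  obtain ⟨J₀, hJ₀⟩ := eventually_atTop.mp (good f hf)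
  rw [eventually_atTop]
  refine ⟨m J₀, fun n hn => ?_⟩
  set p : ℕ → ℕ := stepPart (finc f) with hp
  set j := bi m n with hj
  have hjJ₀ : J₀ ≤ j := bi_ge hm hn
  obtain ⟨k, hk1, hk2⟩ := hJ₀ (j + 1) (by omega)
  have hnpk : n ≤ p k := le_trans (le_of_lt (bi_lt hm n)) hk1
  have hstep : p (k + 1) = p k + finc f (p k) + 1 := stepPart_succ (finc f) k
  calc f n ≤ finc f n := finc_ge f n
    _ ≤ finc f (p k) := finc_mono f hnpk
    _ ≤ m (j + 1 + 1) := by omega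
    _ = m (bi m n + 2) := by rw [hj]

lemma isMeagre_iUnion2 {X : Type*} [TopologicalSpace X] {ι : Type*} [Countable ι]
    {f : ι → Set X} (hf : ∀ i, IsMeagre (f i)) : IsMeagre (⋃ i, f i) := by
  rw [IsMeagre, compl_iUnion]
  exact countable_iInter_mem.mpr hf

lemma isMeagre_preimage_homeo {X Y : Type*} [TopologicalSpace X] [TopologicalSpace Y]
    (h : X ≃ₜ Y) {s : Set Y} (hs : IsMeagre s) : IsMeagre (h ⁻¹' s) := by
  have heq : h ⁻¹' s = h.symm '' s := by
    ext x
    constructor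
    · intro hx; exact ⟨h x, hx, h.symm_apply_apply x⟩
    · rintro ⟨y, hy, rfl⟩; simpa using hy
  rw [heq]
  exact isMeagre_image_homeo h.symm hs

lemma not_isMeagre_univ_real : ¬ IsMeagre (Set.univ : Set ℝ) := by
  intro h
  rw [IsMeagre, compl_univ] at h
  have hd := dense_of_mem_residual h
  have h2 := hd.closure_eq
  rw [closure_empty] at h2
  exact absurd h2 (Set.empty_ne_univ)

lemma isMeagre_singleton_real (r : ℝ) : IsMeagre ({r} : Set ℝ) := by
  rw [isMeagre_iff_countable_union_isNowhereDense]
  refine ⟨{{r}}, ?_, countable_singleton _, by simp⟩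
  intro t ht
  rw [mem_singleton_iff] at ht
  subst ht
  rw [(isClosed_singleton).isNowhereDense_iff, eq_empty_iff_forall_notMem]
  intro x hx
  obtain ⟨ε, hε, hball⟩ := Metric.mem_nhds_iff.mp (mem_interior_iff_mem_nhds.mp hx)
  have h1 : x ∈ ({r} : Set ℝ) := interior_subset hx
  rw [mem_singleton_iff] at h1
  subst h1
  have hmem : x + ε/2 ∈ Metric.ball x ε := by
    rw [Metric.mem_ball, Real.dist_eq]
    rw [abs_of_nonneg (by linarith)]
    linarith
  have := hball hmem
  rw [mem_singleton_iff] at this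
  linarith [congrArg (fun y => y - x) this]

lemma sUnion_singletons : ⋃₀ (Set.range (fun r : ℝ => ({r} : Set ℝ))) = Set.univ := by
  ext r
  simp only [mem_univ, iff_true, mem_sUnion]
  exact ⟨{r}, ⟨r, rfl⟩, rfl⟩

lemma covMeager_set_nonempty :
    { c : Cardinal | ∃ S : Set (Set ℝ), #S = c ∧ (∀ A ∈ S, IsMeagre A) ∧ ⋃₀ S = Set.univ }.Nonempty := by
  refine ⟨_, Set.range (fun r : ℝ => ({r} : Set ℝ)), rfl, ?_, sUnion_singletons⟩
  rintro _ ⟨r, rfl⟩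
  exact isMeagre_singleton_real r

lemma addMeager_set_nonempty :
    { c : Cardinal | ∃ S : Set (Set ℝ), #S = c ∧ (∀ A ∈ S, IsMeagre A) ∧ ¬ IsMeagre (⋃₀ S) }.Nonempty := by
  refine ⟨_, Set.range (fun r : ℝ => ({r} : Set ℝ)), rfl, ?_, ?_⟩
  · rintro _ ⟨r, rfl⟩
    exact isMeagre_singleton_real r
  · rw [sUnion_singletons]
    exact not_isMeagre_univ_real

lemma boundingNumber_set_nonempty :
    { c : Cardinal | ∃ F : Set (ℕ → ℕ), #F = c ∧
      ∀ g : ℕ → ℕ, ∃ f ∈ F, ¬ ∀ᶠ n in atTop, f n ≤ g n }.Nonempty := by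
  refine ⟨_, Set.univ, rfl, fun g => ⟨fun n => g n + 1, mem_univ _, ?_⟩⟩
  intro h
  obtain ⟨N, hN⟩ := eventually_atTop.mp h
  have h2 : g N + 1 ≤ g N := hN N le_rfl
  omega

lemma addMeager_le_covMeager : addMeager ≤ covMeager := by
  obtain ⟨S, h1, h2, h3⟩ := csInf_mem covMeager_set_nonempty
  refine csInf_le (OrderBot.bddBelow _) ⟨S, h1, h2, ?_⟩
  rw [h3]
  exact not_isMeagre_univ_real

lemma addMeager_le_boundingNumber : addMeager ≤ boundingNumber := by
  obtain ⟨F, hFcard, hFunb⟩ := csInf_mem boundingNumber_set_nonempty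
  set Sreal := (fun f : ℕ → ℕ => phi '' Mset (stepPart (finc f)) (fun _ => false)) '' F with hSreal
  have h1 : ∀ A ∈ Sreal, IsMeagre A := by
    rintro _ ⟨f, _, rfl⟩
    exact isMeagre_image_phi (isMeagre_Mset (stepPart_strictMono _) _)
  have h2 : ¬ IsMeagre (⋃₀ Sreal) := by
    intro hme
    apply core_b hFunb
    apply (isMeagre_preimage_phi hme).mono
    intro x hx
    simp only [mem_iUnion, exists_prop] at hx
    obtain ⟨f, hf, hxf⟩ := hx
    rw [mem_preimage]
    exact ⟨phi '' Mset (stepPart (finc f)) (fun _ => false), ⟨f, hf, rfl⟩, ⟨x, hxf, rfl⟩⟩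
  have h3 : addMeager ≤ #Sreal := csInf_le (OrderBot.bddBelow _) ⟨Sreal, rfl, h1, h2⟩
  calc addMeager ≤ #Sreal := h3
    _ ≤ #↑F := mk_image_le
    _ = boundingNumber := hFcard

lemma min_le_addMeager : min boundingNumber covMeager ≤ addMeager := by
  by_contra hc
  push_neg at hc
  rw [lt_min_iff] at hc
  obtain ⟨hab, hacov⟩ := hc
  obtain ⟨S, hScard, hSmea, hSnot⟩ := csInf_mem addMeager_set_nonempty
  -- S must be uncountable
  have hSbig : ℵ₀ ≤ #↑S := by
    by_contra hcs
    push_neg at hcs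
    have hcount : Countable ↑S := mk_le_aleph0_iff.mp (le_of_lt hcs)
    apply hSnot
    rw [sUnion_eq_iUnion]
    exact isMeagre_iUnion2 (fun t => hSmea t t.2)
  have hι : #(↑S × ℤ) = #↑S := by
    rw [mk_prod, lift_id, lift_id, mk_int]
    exact mul_eq_left hSbig hSbig aleph0_ne_zero
  -- the pulled-back family
  set A : (↑S × ℤ) → Set C :=
    fun q => phi ⁻¹' ((fun r : ℝ => r + (q.2 : ℝ)) ⁻¹' (q.1 : Set ℝ)) with hA
  have hAme : ∀ q, IsMeagre (A q) := by
    intro q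
    apply isMeagre_preimage_phi
    exact isMeagre_preimage_homeo (Homeomorph.addRight ((q.2 : ℝ))) (hSmea _ q.1.2)
  -- bounding hypothesis
  have hb : ∀ e : (↑S × ℤ) → ℕ → ℕ, ∃ g : ℕ → ℕ, ∀ β, ∀ᶠ n in atTop, e β n ≤ g n := by
    intro e
    by_contra hce
    push_neg at hce
    have hunb : ∀ g : ℕ → ℕ, ∃ f ∈ Set.range e, ¬ ∀ᶠ n in atTop, f n ≤ g n := by
      intro g
      obtain ⟨β, hβ⟩ := hce g
      exact ⟨e β, mem_range_self β, Filter.not_eventually.mpr (hβ.mono fun n h => not_le.mpr h)⟩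
    have h4 : boundingNumber ≤ #(Set.range e) :=
      csInf_le (OrderBot.bddBelow _) ⟨Set.range e, rfl, hunb⟩
    have h5 : boundingNumber ≤ #↑S := h4.trans (mk_range_le.trans (le_of_eq hι))
    rw [hScard] at h5
    exact absurd hab (not_lt.mpr h5)
  -- covering hypothesis
  have hcov : ∀ B : (↑S × ℤ) → Set C, (∀ β, IsMeagre (B β)) → ∃ w, ∀ β, w ∉ B β := by
    intro B hB
    by_contra hcw
    push_neg at hcw
    set T := Set.range (fun q : (↑S × ℤ) × ℤ =>
      (fun x : ℝ => x + (q.2 : ℝ)) '' (phi '' B q.1)) with hT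
    have hT1 : ∀ t ∈ T, IsMeagre t := by
      rintro _ ⟨q, rfl⟩
      exact isMeagre_image_homeo (Homeomorph.addRight ((q.2 : ℝ))) (isMeagre_image_phi (hB q.1))
    have hT2 : ⋃₀ T = Set.univ := by
      ext r
      simp only [mem_univ, iff_true, mem_sUnion]
      obtain ⟨x, -, hxphi⟩ := exists_phi_eq (fun _ => false) 0 (Int.fract r)
        (Int.fract_nonneg r) (by rw [pow_zero]; exact le_of_lt (Int.fract_lt_one r))
      have hphix : phi x = Int.fract r := by simpa using hxphi
      obtain ⟨β, hβ⟩ := hcw x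
      refine ⟨_, ⟨(β, ⌊r⌋), rfl⟩, ⟨phi x, ⟨x, hβ, rfl⟩, ?_⟩⟩
      rw [hphix]
      exact Int.fract_add_floor r
    have h4 : covMeager ≤ #T := csInf_le (OrderBot.bddBelow _) ⟨T, rfl, hT1, hT2⟩
    have h5 : #T ≤ #((↑S × ℤ) × ℤ) := mk_range_le
    have h6 : #((↑S × ℤ) × ℤ) = #↑S := by
      rw [mk_prod, lift_id, lift_id, mk_int, hι]
      exact mul_eq_left hSbig hSbig aleph0_ne_zero
    have h7 : covMeager ≤ #↑S := h4.trans (h5.trans (le_of_eq h6))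
    rw [hScard] at h7
    exact absurd hacov (not_lt.mpr h7)
  have hMc := core_cov A hb hcov hAme
  apply hSnot
  have hsub : ⋃₀ S ⊆ ⋃ z : ℤ, (fun x : ℝ => x + (z : ℝ)) '' (phi '' (⋃ β, A β)) := by
    intro r hr
    obtain ⟨A₀, hA₀S, hrA₀⟩ := hr
    obtain ⟨x, -, hxphi⟩ := exists_phi_eq (fun _ => false) 0 (Int.fract r)
      (Int.fract_nonneg r) (by rw [pow_zero]; exact le_of_lt (Int.fract_lt_one r))
    have hphix : phi x = Int.fract r := by simpa using hxphi
    refine mem_iUnion.mpr ⟨⌊r⌋, ⟨phi x, ⟨x, ?_, rfl⟩, ?_⟩⟩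
    · refine mem_iUnion.mpr ⟨(⟨A₀, hA₀S⟩, ⌊r⌋), ?_⟩
      show phi x + ((⌊r⌋ : ℤ) : ℝ) ∈ A₀
      rw [hphix, Int.fract_add_floor r]
      exact hrA₀
    · rw [hphix]
      exact Int.fract_add_floor r
  exact (isMeagre_iUnion2 (fun z : ℤ =>
    isMeagre_image_homeo (Homeomorph.addRight ((z : ℝ))) (isMeagre_image_phi hMc))).mono hsub

end AMX

/-- `add(M) = min{b, cov(M)}`. -/
theorem addMeager_eq_min : addMeager = min boundingNumber covMeager :=
  le_antisymm (le_min AMX.addMeager_le_boundingNumber AMX.addMeager_le_covMeager)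
    AMX.min_le_addMeager
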